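/- Failure of the curve selection lemma in the space of arcs (power-series form): Let K be a field and let (f_i)_{i ≥ 1} be a family of formal power series in PowerSeries K such that every f_i has constant coefficient 0 and f_1 = (f_i)^i for every i ≥ 2. Then f_i = 0 for all i ≥ 1. (Consequently, every morphism Spec K[[s]] → Spec k[x₁, x₂, …]/(x₁ − xᵢⁱ : i ≥ 2) sending the closed point to the origin is constant.) -/

import Mathlib

/-- **Failure of the curve selection lemma in the space of arcs** (power-series form).
Let `K` be a field and `(f_i)_{i ≥ 1}` a family of formal power series over `K` such that
every `f_i` has constant coefficient `0` and `f_1 = (f_i)^i` for every `i ≥ 2`.  Then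
`f_i = 0` for all `i ≥ 1`: the only arc through the origin on the scheme
`Spec k[x₁, x₂, …]/(x₁ − xᵢⁱ : i ≥ 2)` is the constant one. -/
private theorem my_order_pow {K : Type*} [Field K] (φ : PowerSeries K) (n : ℕ) :
    (φ ^ n).order = n • φ.order := by
  induction n with
  | zero => simp [PowerSeries.order_one]
  | succ k ih => rw [pow_succ, PowerSeries.order_mul, ih, succ_nsmul]

theorem curve_selection_fails (K : Type*) [Field K] (f : ℕ → PowerSeries K)
    (h0 : ∀ i : ℕ, 1 ≤ i → PowerSeries.coeff 0 (f i) = 0)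
    (h1 : ∀ i : ℕ, 2 ≤ i → f 1 = (f i) ^ i) :
    ∀ i : ℕ, 1 ≤ i → f i = 0 := by
  have horder : ∀ i : ℕ, 1 ≤ i → (1 : ℕ∞) ≤ (f i).order := by
    intro i hi
    apply PowerSeries.le_order
    intro j hj
    have : j < 1 := by exact_mod_cast hj
    interval_cases j
    exact h0 i hi
  have hf1 : f 1 = 0 := by
    by_contra hne
    have hfin : (f 1).order < ⊤ := PowerSeries.order_finite_iff_ne_zero.mpr hne
    obtain ⟨n, hn⟩ := WithTop.ne_top_iff_exists.mp hfin.ne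
    replace hn := hn.symm
    have key : ∀ i : ℕ, 2 ≤ i → (i : ℕ∞) ≤ n := by
      intro i hi
      have : (f 1).order = i • (f i).order := by
        rw [h1 i hi, my_order_pow _ _]
      have hord : (1 : ℕ∞) ≤ (f i).order := horder i (by omega)
      calc (i : ℕ∞) = i • (1 : ℕ∞) := by simp
        _ ≤ i • (f i).order := by
            exact nsmul_le_nsmul_right hord i
        _ = (f 1).order := this.symm
        _ = (n : ℕ∞) := hn
    have := key (n + 2) (by omega)
    have : (n : ℕ) + 2 ≤ n := by exact_mod_cast this
    omega
  intro i hi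
  rcases eq_or_lt_of_le hi with h | h
  · rw [← h]; exact hf1
  · have hi2 : 2 ≤ i := h
    have := h1 i hi2
    rw [hf1] at this
    exact pow_eq_zero_iff (by omega) |>.mp this.symm
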